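/- For any finite supersolvable group G and any conjugacy classes A, B of G such that AB ∩ Z(G) ≠ ∅, the derived length of G/C_G(A) is at most 2·η(AB) − 1. -/

import Mathlib

open Pointwise

/-- A group is supersolvable if it has a normal series with all terms normal
in the whole group and all factors cyclic. -/
def IsSupersolvable (G : Type*) [Group G] : Prop :=
  ∃ (n : ℕ) (s : Fin (n + 1) → Subgroup G),
    s 0 = ⊥ ∧ s (Fin.last n) = ⊤ ∧
    ∃ _ : ∀ i, (s i).Normal,
      ∀ i : Fin n, s i.castSucc ≤ s i.succ ∧
        IsCyclic (↥(s i.succ) ⧸ (s i.castSucc).subgroupOf (s i.succ))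

/-- The conjugacy class of `a` in `G`. -/
def conjClass {G : Type*} [Group G] (a : G) : Set G := {x | ∃ g : G, g⁻¹ * a * g = x}

/-- The number of distinct conjugacy classes of `G` meeting a set `X`. -/
noncomputable def eta {G : Type*} [Group G] (X : Set G) : ℕ :=
  ((fun x => conjClass x) '' X).ncard

section Basic
variable {G : Type*} [Group G] {H : Type*} [Group H]

lemma mem_conjClass_self (a : G) : a ∈ conjClass a := ⟨1, by group⟩

lemma conj_mem_conjClass {a x : G} (h : x ∈ conjClass a) (g : G) :
    g⁻¹ * x * g ∈ conjClass a := by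
  obtain ⟨k, rfl⟩ := h
  exact ⟨k * g, by group⟩

lemma conjClass_eq_of_mem {a x : G} (h : x ∈ conjClass a) : conjClass x = conjClass a := by
  obtain ⟨g, rfl⟩ := h
  ext y
  constructor
  · rintro ⟨k, rfl⟩; exact ⟨g * k, by group⟩
  · rintro ⟨k, rfl⟩; exact ⟨g⁻¹ * k, by group⟩

lemma conjClass_one : conjClass (1 : G) = {1} := by
  ext y; simp only [conjClass, Set.mem_setOf_eq, Set.mem_singleton_iff]
  constructor
  · rintro ⟨g, rfl⟩; group
  · rintro rfl; exact ⟨1, by group⟩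

lemma conjClass_inv (a : G) : (conjClass a)⁻¹ = conjClass a⁻¹ := by
  ext y
  simp only [Set.mem_inv, conjClass, Set.mem_setOf_eq]
  constructor
  · rintro ⟨g, hg⟩
    refine ⟨g, ?_⟩
    have : y = (g⁻¹ * a * g)⁻¹ := by rw [hg]; group
    rw [this]; group
  · rintro ⟨g, rfl⟩; exact ⟨g, by group⟩

lemma image_conjClass (f : G →* H) (hf : Function.Surjective f) (a : G) :
    f '' conjClass a = conjClass (f a) := by
  ext y
  constructor
  · rintro ⟨x, ⟨g, rfl⟩, rfl⟩; exact ⟨f g, by simp [mul_assoc]⟩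
  · rintro ⟨h, rfl⟩
    obtain ⟨g, rfl⟩ := hf h
    exact ⟨g⁻¹ * a * g, ⟨g, rfl⟩, by simp [mul_assoc]⟩

lemma one_mem_D (a : G) : (1 : G) ∈ conjClass a * (conjClass a)⁻¹ := by
  refine ⟨a, mem_conjClass_self a, a⁻¹, ?_, by group⟩
  rw [Set.mem_inv]; simpa using mem_conjClass_self a

lemma conjClass_mul_central {z : G} (hz : z ∈ Subgroup.center G) (x : G) :
    conjClass (x * z) = conjClass x * {z} := by
  have hzc : ∀ w : G, w * z = z * w := Subgroup.mem_center_iff.mp hz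
  ext y
  rw [Set.mul_singleton]
  constructor
  · rintro ⟨g, rfl⟩
    refine ⟨g⁻¹ * x * g, ⟨g, rfl⟩, ?_⟩
    calc g⁻¹ * x * g * z = g⁻¹ * x * (z * g) := by rw [← hzc g]; group
      _ = g⁻¹ * (x * z) * g := by group
  · rintro ⟨w, ⟨g, rfl⟩, rfl⟩
    refine ⟨g, ?_⟩
    calc g⁻¹ * (x * z) * g = g⁻¹ * x * (z * g) := by group
      _ = g⁻¹ * x * g * z := by rw [← hzc g]; group

end Basic

section Eta
variable {G : Type*} [Group G] {H : Type*} [Group H]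

lemma eta_pos [Finite G] {X : Set G} (hX : X.Nonempty) : 1 ≤ eta X := by
  rw [eta, Nat.one_le_iff_ne_zero, Ne, Set.ncard_eq_zero (Set.toFinite _)]
  exact (Set.image_nonempty.mpr hX).ne_empty

lemma image_classes (f : G →* H) (hf : Function.Surjective f) (X : Set G) :
    (fun x => conjClass x) '' (f '' X) = (Set.image f) '' ((fun x => conjClass x) '' X) := by
  rw [Set.image_image, Set.image_image]
  exact Set.image_congr fun x _ => (image_conjClass f hf x).symm

lemma eta_image_le [Finite G] (f : G →* H) (hf : Function.Surjective f) (X : Set G) :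
    eta (f '' X) ≤ eta X := by
  rw [eta, eta, image_classes f hf X]
  exact Set.ncard_image_le (Set.toFinite _)

lemma eta_image_lt [Finite G] (f : G →* H) (hf : Function.Surjective f) {X : Set G}
    (h1 : (1 : G) ∈ X) {d : G} (hd : d ∈ X) (hd1 : d ≠ 1) (hfd : f d = 1) :
    eta (f '' X) < eta X := by
  classical
  set s : Set (Set G) := (fun x => conjClass x) '' X with hs
  have hcd : conjClass d ∈ s := ⟨d, hd, rfl⟩
  have hc1 : conjClass (1 : G) ∈ s := ⟨1, h1, rfl⟩
  have hne : conjClass (1 : G) ≠ conjClass d := by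
    intro h
    have := mem_conjClass_self d
    rw [← h, conjClass_one, Set.mem_singleton_iff] at this
    exact hd1 this
  have hsub : (Set.image f) '' s ⊆ (Set.image f) '' (s \ {conjClass d}) := by
    rintro _ ⟨t, ht, rfl⟩
    by_cases h : t = conjClass d
    · subst h
      refine ⟨conjClass (1 : G), ⟨hc1, hne⟩, ?_⟩
      rw [image_conjClass f hf, image_conjClass f hf, hfd, map_one]
    · exact ⟨t, ⟨ht, h⟩, rfl⟩
  calc eta (f '' X) = ((Set.image f) '' s).ncard := by rw [eta, image_classes f hf X]
    _ ≤ ((Set.image f) '' (s \ {conjClass d})).ncard := Set.ncard_le_ncard hsub (Set.toFinite _)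
    _ ≤ (s \ {conjClass d}).ncard := Set.ncard_image_le (Set.toFinite _)
    _ < s.ncard := Set.ncard_lt_ncard (Set.sdiff_singleton_ssubset.mpr hcd) (Set.toFinite _)
    _ = eta X := rfl

lemma eta_mul_central {z : G} (hz : z ∈ Subgroup.center G) (X : Set G) :
    eta (X * {z}) = eta X := by
  have himg : (fun S : Set G => S * {z}) = Set.image (· * z) := by
    funext S; exact Set.mul_singleton
  have hinj : Function.Injective (fun S : Set G => S * {z}) := by
    rw [himg]
    exact Set.image_injective.mpr (mul_left_injective z)
  rw [eta, eta, Set.mul_singleton, Set.image_image]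
  calc ((fun x => conjClass (x * z)) '' X).ncard
      = ((fun x => conjClass x * {z}) '' X).ncard := by
        rw [Set.image_congr fun x _ => conjClass_mul_central hz x]
    _ = ((fun S : Set G => S * {z}) '' ((fun x => conjClass x) '' X)).ncard := by
        rw [Set.image_image]
    _ = ((fun x => conjClass x) '' X).ncard := Set.ncard_image_of_injective _ hinj

end Eta

section SS
variable {G : Type*} [Group G] {H : Type*} [Group H]

lemma IsSupersolvable.map (f : G →* H) (hf : Function.Surjective f)
    (hG : IsSupersolvable G) : IsSupersolvable H := by
  obtain ⟨n, s, h0, hl, hnorm, hstep⟩ := hG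
  refine ⟨n, fun i => (s i).map f, ?_, ?_, fun i => (hnorm i).map f hf, ?_⟩
  · show (s 0).map f = ⊥
    rw [h0]; exact Subgroup.map_bot f
  · show (s (Fin.last n)).map f = ⊤
    rw [hl]; exact Subgroup.map_top_of_surjective f hf
  · intro i
    refine ⟨Subgroup.map_mono (hstep i).1, ?_⟩
    have hcyc := (hstep i).2
    set K := s i.succ
    set L := s i.castSucc
    haveI : (L.map f).Normal := (hnorm i.castSucc).map f hf
    have hφcond : L.subgroupOf K ≤ ((L.map f).subgroupOf (K.map f)).comap (f.subgroupMap K) := by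
      intro x hx
      simp only [Subgroup.mem_comap, Subgroup.mem_subgroupOf] at hx ⊢
      exact ⟨(x : G), hx, rfl⟩
    refine isCyclic_of_surjective
      (QuotientGroup.map (L.subgroupOf K) ((L.map f).subgroupOf (K.map f)) (f.subgroupMap K) hφcond) ?_
    intro y
    obtain ⟨y', rfl⟩ := QuotientGroup.mk'_surjective _ y
    obtain ⟨x, hx⟩ := f.subgroupMap_surjective K y'
    exact ⟨QuotientGroup.mk x, by rw [← hx]; rfl⟩

lemma exists_cyclic_normal [Nontrivial G] (hG : IsSupersolvable G) :
    ∃ T : Subgroup G, T.Normal ∧ IsCyclic T ∧ T ≠ ⊥ := by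
  classical
  obtain ⟨n, s, h0, hl, hnorm, hstep⟩ := hG
  have hQ : ∃ k : ℕ, ∃ h : k < n + 1, s ⟨k, h⟩ ≠ ⊥ := by
    refine ⟨n, Nat.lt_succ_self n, ?_⟩
    show s (Fin.last n) ≠ ⊥
    rw [hl]
    intro htop
    obtain ⟨x, hx⟩ := exists_ne (1 : G)
    exact hx ((Subgroup.eq_bot_iff_forall _).mp htop x (Subgroup.mem_top x))
  obtain ⟨hkn, hks⟩ := Nat.find_spec hQ
  have hmin : ∀ m, m < Nat.find hQ → ¬ ∃ h : m < n + 1, s ⟨m, h⟩ ≠ ⊥ :=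
    fun m hm => Nat.find_min hQ hm
  generalize hgen : Nat.find hQ = k at hkn hks hmin
  have hk0 : k ≠ 0 := by
    intro h
    subst h
    apply hks
    have : (⟨0, hkn⟩ : Fin (n+1)) = 0 := rfl
    rw [this, h0]
  obtain ⟨j, rfl⟩ := Nat.exists_eq_succ_of_ne_zero hk0
  have hjn : j < n := by omega
  set i : Fin n := ⟨j, hjn⟩
  have hprev : s i.castSucc = ⊥ := by
    have h' := hmin j (by omega)
    push_neg at h'
    exact h' _
  have hsucc : s i.succ ≠ ⊥ := hks
  refine ⟨s i.succ, hnorm _, ?_, hsucc⟩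
  have hcyc := (hstep i).2
  haveI := hnorm i.castSucc
  haveI : ((s i.castSucc).subgroupOf (s i.succ)).Normal := Subgroup.normal_subgroupOf
  have e1 : (s i.castSucc).subgroupOf (s i.succ) = ⊥ := by
    rw [hprev, Subgroup.bot_subgroupOf]
  exact isCyclic_of_surjective
    ((QuotientGroup.quotientBot (G := ↥(s i.succ))).toMonoidHom.comp
      (QuotientGroup.quotientMulEquivOfEq e1).toMonoidHom)
    ((QuotientGroup.quotientBot (G := ↥(s i.succ))).surjective.comp
      (QuotientGroup.quotientMulEquivOfEq e1).surjective)
end SS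

section Key
variable {G : Type*} [Group G]
open scoped commutatorElement

lemma derivedSeries_antitone' : Antitone (derivedSeries G) := by
  apply antitone_nat_of_succ_le
  intro n
  rw [derivedSeries_succ]
  haveI := derivedSeries_normal G n
  exact Subgroup.commutator_le_left _ _

lemma ds_one_le_centralizer_of_cyclic (T : Subgroup G) [T.Normal] (hT : IsCyclic T) :
    derivedSeries G 1 ≤ Subgroup.centralizer (T : Set G) := by
  have h1 : derivedSeries G 1 = ⁅(⊤ : Subgroup G), ⊤⁆ := by
    rw [derivedSeries_succ, derivedSeries_zero]
  rw [h1]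
  rw [Subgroup.commutator_le]
  intro g1 _ g2 _
  rw [Subgroup.mem_centralizer_iff]
  set u := g1 * g2 with hu
  set v := g2 * g1 with hv
  have hAll : ∀ t : T, u * (t : G) * u⁻¹ = v * (t : G) * v⁻¹ := by
    obtain ⟨m1, hm1⟩ := MonoidHom.map_cyclic (MulAut.conjNormal (H := T) g1).toMonoidHom
    obtain ⟨m2, hm2⟩ := MonoidHom.map_cyclic (MulAut.conjNormal (H := T) g2).toMonoidHom
    intro t
    have hc : MulAut.conjNormal g1 (MulAut.conjNormal g2 t)
        = MulAut.conjNormal g2 (MulAut.conjNormal g1 t) := by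
      have e1 : ∀ s : T, MulAut.conjNormal g1 s = s ^ m1 := hm1
      have e2 : ∀ s : T, MulAut.conjNormal g2 s = s ^ m2 := hm2
      rw [e1, e2, e1, e2, ← zpow_mul, ← zpow_mul, mul_comm]
    have := congrArg (Subtype.val) hc
    simp only [MulAut.conjNormal_apply] at this
    calc u * (t : G) * u⁻¹ = g1 * (g2 * t * g2⁻¹) * g1⁻¹ := by rw [hu]; group
    _ = g2 * (g1 * t * g1⁻¹) * g2⁻¹ := this
    _ = v * (t : G) * v⁻¹ := by rw [hv]; group
  intro t ht
  have hmem : v⁻¹ * t * v ∈ T := (Subgroup.Normal.conj_mem' ‹T.Normal› t ht v)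
  have h2 : u * (v⁻¹ * t * v) * u⁻¹ = t := by
    have := hAll ⟨v⁻¹ * t * v, hmem⟩
    simp only [Subgroup.coe_mk] at this
    rw [this]; group
  have h4 : t * ⁅g1, g2⁆ = ⁅g1, g2⁆ * t := by
    have hc : ⁅g1, g2⁆ = u * v⁻¹ := by rw [hu, hv, commutatorElement_def]; group
    rw [hc]
    conv_lhs => rw [← h2]
    group
  exact h4

lemma key_step (T : Subgroup G) [T.Normal] (hT : IsCyclic T) (x : G) (H : Subgroup G)
    (hHc : H ≤ Subgroup.centralizer (T : Set G))
    (hcond : ∀ h ∈ H, x⁻¹ * h⁻¹ * x * h ∈ T) :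
    ⁅H, H⁆ ≤ Subgroup.centralizer {x} := by
  letI : CommGroup T := hT.commGroup
  rw [Subgroup.commutator_le]
  intro g1 hg1 g2 hg2
  rw [Subgroup.mem_centralizer_iff]
  intro y hy
  rw [Set.mem_singleton_iff] at hy
  rw [hy]
  have hhom : ∀ p ∈ H, ∀ q ∈ H,
      x⁻¹ * (p * q)⁻¹ * x * (p * q)
        = (x⁻¹ * q⁻¹ * x * q) * (x⁻¹ * p⁻¹ * x * p) := by
    intro p hp q hq
    have hfp : x⁻¹ * p⁻¹ * x * p ∈ T := hcond p hp
    have hqc : (x⁻¹ * p⁻¹ * x * p) * q = q * (x⁻¹ * p⁻¹ * x * p) :=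
      Subgroup.mem_centralizer_iff.mp (hHc hq) _ hfp
    have hconj : q⁻¹ * (x⁻¹ * p⁻¹ * x * p) * q = x⁻¹ * p⁻¹ * x * p := by
      rw [mul_assoc, hqc]; group
    calc x⁻¹ * (p * q)⁻¹ * x * (p * q)
        = (x⁻¹ * q⁻¹ * x * q) * (q⁻¹ * (x⁻¹ * p⁻¹ * x * p) * q) := by group
      _ = (x⁻¹ * q⁻¹ * x * q) * (x⁻¹ * p⁻¹ * x * p) := by rw [hconj]
  have hkey : x⁻¹ * (g1 * g2)⁻¹ * x * (g1 * g2) = x⁻¹ * (g2 * g1)⁻¹ * x * (g2 * g1) := by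
    rw [hhom g1 hg1 g2 hg2, hhom g2 hg2 g1 hg1]
    have c1 : (⟨_, hcond g1 hg1⟩ : T) * (⟨_, hcond g2 hg2⟩ : T)
        = (⟨_, hcond g2 hg2⟩ : T) * (⟨_, hcond g1 hg1⟩ : T) := mul_comm _ _
    exact (congrArg Subtype.val c1).symm
  set u := g1 * g2 with hu
  set v := g2 * g1 with hv
  have E2 : u⁻¹ * x * u = v⁻¹ * x * v := by
    calc u⁻¹ * x * u = x * (x⁻¹ * u⁻¹ * x * u) := by group
      _ = x * (x⁻¹ * v⁻¹ * x * v) := by rw [hkey]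
      _ = v⁻¹ * x * v := by group
  have hc : ⁅g1, g2⁆ = u * v⁻¹ := by rw [hu, hv, commutatorElement_def]; group
  rw [hc]
  calc x * (u * v⁻¹) = u * (u⁻¹ * x * u) * v⁻¹ := by group
    _ = u * (v⁻¹ * x * v) * v⁻¹ := by rw [E2]
    _ = (u * v⁻¹) * x := by group
end Key

section Core
universe u

lemma core : ∀ (c : ℕ) (G : Type u) [Group G] [Finite G], Nat.card G ≤ c → IsSupersolvable G →
    ∀ a : G, derivedSeries G (2 * eta (conjClass a * (conjClass a)⁻¹) - 1)
      ≤ Subgroup.centralizer (conjClass a) := by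
  intro c
  induction c with
  | zero =>
    intro G _ _ hcard _ a
    have := Nat.card_pos (α := G)
    omega
  | succ c ih =>
    intro G _ _ hcard hG a
    set D := conjClass a * (conjClass a)⁻¹ with hD
    by_cases htriv : ∀ d ∈ D, d = 1
    · have hcent : Subgroup.centralizer (conjClass a) = ⊤ := by
        rw [Subgroup.eq_top_iff']
        intro g
        rw [Subgroup.mem_centralizer_iff]
        intro y hy
        have hyinv : y⁻¹ ∈ (conjClass a)⁻¹ := by
          rw [Set.mem_inv]; simpa using hy
        have hmem : (g⁻¹ * y * g) * y⁻¹ ∈ D := by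
          rw [hD]
          exact Set.mul_mem_mul (conj_mem_conjClass hy g) hyinv
        have h1 : y * g = g * (((g⁻¹ * y * g) * y⁻¹) * y) := by group
        rw [htriv _ hmem, one_mul] at h1
        exact h1
      rw [hcent]; exact le_top
    · push_neg at htriv
      obtain ⟨d0, hd0D, hd0⟩ := htriv
      haveI : Nontrivial G := ⟨d0, 1, hd0⟩
      obtain ⟨T, hTn, hTc, hTb⟩ := exists_cyclic_normal hG
      haveI := hTn
      set π := QuotientGroup.mk' T with hπdef
      have hπs : Function.Surjective π := QuotientGroup.mk'_surjective T
      have hkerT : ∀ w : G, π w = 1 → w ∈ T := by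
        intro w hw
        have : w ∈ (QuotientGroup.mk' T).ker := MonoidHom.mem_ker.mpr hw
        rwa [QuotientGroup.ker_mk'] at this
      have hssq : IsSupersolvable (G ⧸ T) := IsSupersolvable.map π hπs hG
      have hcard2 : Nat.card (G ⧸ T) ≤ c := by
        have h1 : Nat.card G = Nat.card (G ⧸ T) * Nat.card T :=
          Subgroup.card_eq_card_quotient_mul_card_subgroup T
        have h2 : 1 < Nat.card T := (Subgroup.one_lt_card_iff_ne_bot T).mpr hTb
        have h3 : 0 < Nat.card (G ⧸ T) := Nat.card_pos
        have h4 : Nat.card (G ⧸ T) * 2 ≤ Nat.card (G ⧸ T) * Nat.card T :=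
          Nat.mul_le_mul_left _ h2
        omega
      have hq := ih (G ⧸ T) hcard2 hssq (π a)
      have hπD : π '' D = conjClass (π a) * (conjClass (π a))⁻¹ := by
        rw [hD, Set.image_mul, image_conjClass π hπs, conjClass_inv, image_conjClass π hπs,
          map_inv, ← conjClass_inv]
      have hmn : eta (conjClass (π a) * (conjClass (π a))⁻¹) ≤ eta D := by
        rw [← hπD]
        exact eta_image_le π hπs D
      set m := eta (conjClass (π a) * (conjClass (π a))⁻¹) with hm
      set n := eta D with hn
      have hm1 : 1 ≤ m := eta_pos ⟨1, one_mem_D (π a)⟩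
      -- the commutator condition transfer
      have hcondT : ∀ h : G, (π h ∈ Subgroup.centralizer (conjClass (π a))) →
          ∀ x ∈ conjClass a, (x⁻¹ * h⁻¹ * x * h ∈ T ∧ (h⁻¹ * x * h) * x⁻¹ ∈ T) := by
        intro h hh x hx
        have hπx : π x ∈ conjClass (π a) := by
          rw [← image_conjClass π hπs]
          exact ⟨x, hx, rfl⟩
        have hcomm : π x * π h = π h * π x :=
          Subgroup.mem_centralizer_iff.mp hh _ hπx
        constructor
        · apply hkerT
          have : π (x⁻¹ * h⁻¹ * x * h) = (π x)⁻¹ * (π h)⁻¹ * (π x * π h) := by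
            simp only [map_mul, map_inv]; group
          rw [this, hcomm]; group
        · apply hkerT
          have : π ((h⁻¹ * x * h) * x⁻¹) = (π h)⁻¹ * (π x * π h) * (π x)⁻¹ := by
            simp only [map_mul, map_inv]; group
          rw [this, hcomm]; group
      by_cases hDT : ∀ d ∈ D, d ∈ T → d = 1
      · -- case B : no element of D dies in the quotient
        intro h hh
        rw [Subgroup.mem_centralizer_iff]
        intro x hx
        have hπh : π h ∈ derivedSeries (G ⧸ T) (2 * m - 1) := by
          have h1 : π h ∈ derivedSeries (G ⧸ T) (2 * n - 1) :=
            map_derivedSeries_le_derivedSeries π _ (Subgroup.mem_map.mpr ⟨h, hh, rfl⟩)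
          exact derivedSeries_antitone' (by omega : 2 * m - 1 ≤ 2 * n - 1) h1
        have hT2 := (hcondT h (hq hπh) x hx).2
        have hw : (h⁻¹ * x * h) * x⁻¹ ∈ D := by
          rw [hD]
          refine Set.mul_mem_mul (conj_mem_conjClass hx h) ?_
          rw [Set.mem_inv]; simpa using hx
        have h1 : x * h = h * (((h⁻¹ * x * h) * x⁻¹) * x) := by group
        rw [hDT _ hw hT2, one_mul] at h1
        exact h1
      · -- case A : some nontrivial element of D lies in T, so eta drops
        push_neg at hDT
        obtain ⟨d, hdD, hdT, hd1⟩ := hDT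
        have hlt : m < n := by
          rw [hm, ← hπD, hn]
          refine eta_image_lt π hπs (one_mem_D a) hdD hd1 ?_
          have : d ∈ (QuotientGroup.mk' T).ker := by rw [QuotientGroup.ker_mk']; exact hdT
          exact MonoidHom.mem_ker.mp this
        have hHc : derivedSeries G (2 * m - 1) ≤ Subgroup.centralizer (T : Set G) :=
          le_trans (derivedSeries_antitone' (by omega : 1 ≤ 2 * m - 1))
            (ds_one_le_centralizer_of_cyclic T hTc)
        have hsub : ∀ x ∈ conjClass a,
            derivedSeries G (2 * m - 1 + 1) ≤ Subgroup.centralizer {x} := by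
          intro x hx
          have hcond : ∀ h ∈ derivedSeries G (2 * m - 1), x⁻¹ * h⁻¹ * x * h ∈ T := by
            intro h hh
            have hπh : π h ∈ derivedSeries (G ⧸ T) (2 * m - 1) :=
              map_derivedSeries_le_derivedSeries π _ (Subgroup.mem_map.mpr ⟨h, hh, rfl⟩)
            exact (hcondT h (hq hπh) x hx).1
          have := key_step T hTc x (derivedSeries G (2 * m - 1)) hHc hcond
          rwa [← derivedSeries_succ] at this
        intro g hg
        rw [Subgroup.mem_centralizer_iff]
        intro x hx
        have hg' : g ∈ derivedSeries G (2 * m - 1 + 1) :=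
          derivedSeries_antitone' (by omega : 2 * m - 1 + 1 ≤ 2 * n - 1) hg
        have := hsub x hx hg'
        exact Subgroup.mem_centralizer_iff.mp this x rfl

end Core

/-- Corollary C: for a finite supersolvable group `G` and conjugacy
classes `A`, `B` with `AB ∩ Z(G) ≠ ∅`, `dl(G/C_G(A)) ≤ 2·η(AB) − 1`; equivalently
the `(2η(AB)−1)`-st derived subgroup of `G` is contained in `C_G(A)`. -/
theorem stmt11 {G : Type*} [Group G] [Fintype G] (hG : IsSupersolvable G) (a b : G)
    (h : (conjClass a * conjClass b ∩ (Subgroup.center G : Set G)).Nonempty) :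
    derivedSeries G (2 * eta (conjClass a * conjClass b) - 1) ≤
      Subgroup.centralizer (conjClass a) := by
  obtain ⟨z, hzAB, hzZ⟩ := h
  rw [Set.mem_mul] at hzAB
  obtain ⟨a1, ha1, b1, hb1, hab⟩ := hzAB
  have hzZ' : z ∈ Subgroup.center G := hzZ
  have hA : conjClass a = conjClass a1 := (conjClass_eq_of_mem ha1).symm
  have hB : conjClass b = conjClass b1 := (conjClass_eq_of_mem hb1).symm
  have hb1e : b1 = a1⁻¹ * z := by rw [← hab]; group
  have hAB : conjClass a * conjClass b = (conjClass a1 * (conjClass a1)⁻¹) * {z} := by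
    rw [hA, hB, hb1e, conjClass_mul_central hzZ' a1⁻¹, ← conjClass_inv, ← mul_assoc]
  rw [hAB, eta_mul_central hzZ', hA]
  exact core (Nat.card G) G le_rfl hG a1
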